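/- Let y ∈ ℝ^d, x ∈ ℝ^d, r ≥ 1 an integer, and γ(t) = x + t^r y. If f is C^{rj} near x, then (1/(rj)!)(f∘γ)^{(rj)}(0) = (1/j!) f^{(j)}(x)(y^j), and (f∘γ)^{(k)}(0) = 0 whenever k is not a multiple of r. -/

import Mathlib

open Asymptotics Filter Finset


lemma taylor_peano (n : ℕ) : ∀ (φ : ℝ → ℝ), ContDiffAt ℝ (n : ℕ∞) φ 0 →
    (fun t : ℝ => φ t - ∑ k ∈ Finset.range (n + 1), iteratedDeriv k φ 0 / (k.factorial : ℝ) * t ^ k)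
      =o[nhds (0 : ℝ)] fun t : ℝ => t ^ n := by
  induction n with
  | zero =>
    intro φ hφ
    simp only [pow_zero, Finset.range_one, Finset.sum_singleton, iteratedDeriv_zero,
      Nat.factorial_zero, Nat.cast_one, div_one, mul_one]
    rw [isLittleO_one_iff]
    have := hφ.continuousAt.tendsto
    simpa using this.sub (tendsto_const_nhds (x := φ 0))
  | succ n ih =>
    intro φ hφ
    obtain ⟨V, hVo, hV0, hVd⟩ := hφ.contDiffOn' le_rfl (by simp)
    rw [Set.insert_eq_of_mem (Set.mem_univ _), Set.univ_inter] at hVd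
    set ψ := deriv φ with hψdef
    have hψV : ContDiffOn ℝ (n : ℕ∞) ψ V := hVd.deriv_of_isOpen hVo (by exact_mod_cast le_rfl)
    have hψ : ContDiffAt ℝ (n : ℕ∞) ψ 0 := hψV.contDiffAt (hVo.mem_nhds hV0)
    have hG := ih ψ hψ
    set G : ℝ → ℝ := fun t => ψ t - ∑ k ∈ Finset.range (n + 1),
      iteratedDeriv k ψ 0 / (k.factorial : ℝ) * t ^ k with hGdef
    set F : ℝ → ℝ := fun t => φ t - ∑ k ∈ Finset.range (n + 2),
      iteratedDeriv k φ 0 / (k.factorial : ℝ) * t ^ k with hFdef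
    have hF0 : F 0 = 0 := by
      simp only [hFdef]
      rw [Finset.sum_eq_single_of_mem 0 (Finset.mem_range.2 (Nat.succ_pos _))]
      · simp
      · intro k _ hk
        simp [zero_pow hk]
    have hFd : ∀ s ∈ V, HasDerivAt F (G s) s := by
      intro s hs
      have hφs : HasDerivAt φ (ψ s) s := by
        have : DifferentiableAt ℝ φ s :=
          (hVd.differentiableOn (by simp)).differentiableAt
            (hVo.mem_nhds hs)
        exact this.hasDerivAt
      have hpoly : HasDerivAt (fun t : ℝ => ∑ k ∈ Finset.range (n + 2),
          iteratedDeriv k φ 0 / (k.factorial : ℝ) * t ^ k)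
          (∑ k ∈ Finset.range (n + 1),
            iteratedDeriv k ψ 0 / (k.factorial : ℝ) * s ^ k) s := by
        have h1 : HasDerivAt (fun t : ℝ => ∑ k ∈ Finset.range (n + 2),
            iteratedDeriv k φ 0 / (k.factorial : ℝ) * t ^ k)
            (∑ k ∈ Finset.range (n + 2),
              iteratedDeriv k φ 0 / (k.factorial : ℝ) * (k * s ^ (k - 1))) s :=
          HasDerivAt.fun_sum fun k _ => (hasDerivAt_pow k s).const_mul _
        convert h1 using 1
        symm
        rw [Finset.sum_range_succ']
        simp only [Nat.cast_zero, zero_mul, mul_zero, add_zero, Nat.zero_sub, pow_zero]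
        refine Finset.sum_congr rfl fun i _ => ?_
        rw [hψdef, ← iteratedDeriv_succ']
        rw [Nat.add_sub_cancel]
        rw [Nat.factorial_succ]
        push_cast
        have h2 : (i.factorial : ℝ) ≠ 0 := Nat.cast_ne_zero.2 i.factorial_ne_zero
        field_simp
      exact hφs.sub hpoly
    rw [isLittleO_iff]
    intro ε hε
    have hGe := isLittleO_iff.1 hG hε
    have hball := Metric.eventually_nhds_iff.1 (hGe.and (hVo.eventually_mem hV0))
    obtain ⟨δ, hδ, hδP⟩ := hball
    rw [Metric.eventually_nhds_iff]
    refine ⟨δ, hδ, fun t ht => ?_⟩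
    have hsub : Metric.closedBall (0 : ℝ) |t| ⊆ Metric.ball (0 : ℝ) δ := by
      intro z hz
      simp only [Metric.mem_closedBall, Real.dist_eq, sub_zero] at hz
      simp only [Metric.mem_ball, Real.dist_eq, sub_zero]
      calc |z| ≤ |t| := hz
        _ < δ := by simpa [Real.dist_eq] using ht
    have key := Convex.norm_image_sub_le_of_norm_hasDerivWithin_le
      (f := F) (f' := G) (s := Metric.closedBall (0 : ℝ) |t|) (C := ε * |t| ^ n) (x := 0) (y := t)
      (fun z hz => (hFd z (hδP (by simpa [Real.dist_eq] using hsub hz)).2).hasDerivWithinAt)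
      (fun z hz => by
        have hzδ : dist z (0 : ℝ) < δ := by simpa [Real.dist_eq] using hsub hz
        have h1 := (hδP hzδ).1
        simp only [Real.norm_eq_abs, abs_pow] at h1 ⊢
        refine h1.trans (mul_le_mul_of_nonneg_left (pow_le_pow_left₀ (abs_nonneg z) ?_ n) hε.le)
        simpa [Real.dist_eq] using hz)
      (convex_closedBall _ _)
      (Metric.mem_closedBall_self (abs_nonneg t)) (Metric.mem_closedBall.2 (by simp [Real.dist_eq]))
    rw [hF0, sub_zero, sub_zero] at key
    calc ‖F t‖ ≤ ε * |t| ^ n * ‖t‖ := key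
      _ = ε * ‖t ^ (n + 1)‖ := by
        rw [Real.norm_eq_abs, Real.norm_eq_abs, abs_pow, pow_succ]
        ring

lemma line_iteratedDeriv {e : ℕ} (f : EuclideanSpace ℝ (Fin e) → ℝ)
    (U : Set (EuclideanSpace ℝ (Fin e))) (hU : IsOpen U) (n : ℕ)
    (hf : ContDiffOn ℝ (n : ℕ∞) f U) (x y : EuclideanSpace ℝ (Fin e)) :
    ∀ m : ℕ, m ≤ n → ∀ t : ℝ, x + t • y ∈ U →
      iteratedDeriv m (fun s : ℝ => f (x + s • y)) t
        = iteratedFDeriv ℝ m f (x + t • y) (fun _ => y) := by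
  intro m
  induction m with
  | zero => intro _ t _; simp [iteratedDeriv_zero]
  | succ m ih =>
    intro hm t ht
    have hSo : IsOpen {s : ℝ | x + s • y ∈ U} :=
      hU.preimage (by continuity)
    have hmn : m ≤ n := le_of_lt (Nat.lt_of_succ_le hm)
    have hdiffOn : DifferentiableOn ℝ (iteratedFDeriv ℝ m f) U := by
      refine (hf.differentiableOn_iteratedFDerivWithin ?_ hU.uniqueDiffOn).congr
        fun z hz => (iteratedFDerivWithin_of_isOpen m hU hz).symm
      exact_mod_cast Nat.lt_of_succ_le hm
    have key : ∀ s ∈ {s : ℝ | x + s • y ∈ U},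
        HasDerivAt (fun u : ℝ => iteratedFDeriv ℝ m f (x + u • y) (fun _ => y))
          (iteratedFDeriv ℝ (m + 1) f (x + s • y) (fun _ => y)) s := by
      intro s hs
      have hdiff : DifferentiableAt ℝ (iteratedFDeriv ℝ m f) (x + s • y) :=
        (hdiffOn (x + s • y) hs).differentiableAt (hU.mem_nhds hs)
      have hA : HasDerivAt (fun u : ℝ => x + u • y) y s := by
        simpa using ((hasDerivAt_id s).smul_const y).const_add x
      have hcomp := hdiff.hasFDerivAt.comp_hasDerivAt s hA
      have happ := (ContinuousMultilinearMap.apply ℝ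
        (fun _ : Fin m => EuclideanSpace ℝ (Fin e)) ℝ
        (fun _ => y)).hasFDerivAt.comp_hasDerivAt s hcomp
      convert happ using 1
      all_goals rfl
    rw [iteratedDeriv_succ]
    have hcongr : Set.EqOn (iteratedDeriv m fun s : ℝ => f (x + s • y))
        (fun u : ℝ => iteratedFDeriv ℝ m f (x + u • y) (fun _ => y))
        {s : ℝ | x + s • y ∈ U} := fun s hs => ih hmn s hs
    have hev : (iteratedDeriv m fun s : ℝ => f (x + s • y))
        =ᶠ[nhds t] (fun u : ℝ => iteratedFDeriv ℝ m f (x + u • y) (fun _ => y)) := by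
      filter_upwards [hSo.mem_nhds ht] with s hs using hcongr hs
    rw [hev.deriv_eq]
    exact (key t ht).deriv

lemma poly_isLittleO_zero (n : ℕ) (a : ℕ → ℝ)
    (h : (fun t : ℝ => ∑ k ∈ Finset.range (n + 1), a k * t ^ k) =o[nhds (0 : ℝ)] fun t => t ^ n) :
    ∀ k ≤ n, a k = 0 := by
  suffices H : ∀ m, m ≤ n → (∀ i < m, a i = 0) → a m = 0 by
    intro k hk
    induction k using Nat.strong_induction_on with
    | _ k ih => exact H k hk fun i hi => ih i hi (le_trans (le_of_lt hi) hk)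
  intro m hm hprev
  set q : ℝ → ℝ := fun t => ∑ i ∈ Finset.range (n + 1 - m), a (m + i) * t ^ i with hq
  have hpq : ∀ t : ℝ, (∑ k ∈ Finset.range (n + 1), a k * t ^ k) = t ^ m * q t := by
    intro t
    rw [← Finset.sum_range_add_sum_Ico _ (Nat.le_succ_of_le hm)]
    rw [Finset.sum_eq_zero fun i hi => by
      rw [hprev i (Finset.mem_range.1 hi), zero_mul]]
    rw [zero_add, Finset.sum_Ico_eq_sum_range, hq, Finset.mul_sum]
    exact Finset.sum_congr rfl fun i _ => by rw [pow_add]; ring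
  have hqcont : Continuous q :=
    continuous_finset_sum _ fun i _ => continuous_const.mul (continuous_pow i)
  have hq0 : q 0 = a m := by
    have hmem : 0 ∈ Finset.range (n + 1 - m) := Finset.mem_range.2 (by omega)
    show (∑ i ∈ Finset.range (n + 1 - m), a (m + i) * (0 : ℝ) ^ i) = a m
    rw [Finset.sum_eq_single_of_mem 0 hmem]
    · simp
    · intro i _ hi; simp [zero_pow hi]
  have h' := h.mono (nhdsWithin_le_nhds (s := {(0 : ℝ)}ᶜ))
  have hne : ∀ᶠ t : ℝ in nhdsWithin 0 {(0 : ℝ)}ᶜ, t ≠ 0 :=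
    eventually_mem_nhdsWithin.mono fun t ht => ht
  have hT : Tendsto (fun t : ℝ => (∑ k ∈ Finset.range (n + 1), a k * t ^ k) / t ^ n)
      (nhdsWithin 0 {(0 : ℝ)}ᶜ) (nhds 0) := by
    rw [← isLittleO_iff_tendsto' (hne.mono fun t ht h0 => absurd (pow_eq_zero_iff (by
      intro hn; exact ht (by simpa [hn] using h0)) |>.1 h0) ht)]
    · exact h'
  have hT2 : Tendsto (fun t : ℝ =>
      ((∑ k ∈ Finset.range (n + 1), a k * t ^ k) / t ^ n) * t ^ (n - m))
      (nhdsWithin 0 {(0 : ℝ)}ᶜ) (nhds 0) := by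
    have := hT.mul (((continuous_pow (n - m)).tendsto 0).mono_left
      (nhdsWithin_le_nhds (s := {(0 : ℝ)}ᶜ)))
    simpa using this
  have hqeq : ∀ᶠ t : ℝ in nhdsWithin 0 {(0 : ℝ)}ᶜ,
      ((∑ k ∈ Finset.range (n + 1), a k * t ^ k) / t ^ n) * t ^ (n - m) = q t := by
    filter_upwards [hne] with t ht
    rw [hpq t, div_mul_eq_mul_div, div_eq_iff (pow_ne_zero n ht)]
    rw [show t ^ m * q t * t ^ (n - m) = q t * (t ^ m * t ^ (n - m)) by ring,
      ← pow_add, Nat.add_sub_cancel' hm]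
  have hq_tendsto0 : Tendsto q (nhdsWithin 0 {(0 : ℝ)}ᶜ) (nhds 0) :=
    hT2.congr' hqeq
  have hq_tendsto_am : Tendsto q (nhdsWithin 0 {(0 : ℝ)}ᶜ) (nhds (a m)) := by
    rw [← hq0]
    exact (hqcont.tendsto 0).mono_left (nhdsWithin_le_nhds)
  exact tendsto_nhds_unique hq_tendsto_am hq_tendsto0


/-- for `γ(t) = x + t^r y` and `f` of class `C^{rj}` near `x`,
`(1/(rj)!)(f∘γ)^{(rj)}(0) = (1/j!) f^{(j)}(x)(y^j)`, and `(f∘γ)^{(k)}(0) = 0`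
whenever `k` is not a multiple of `r`. -/
theorem stmt3 (e r j : ℕ) (hr : 1 ≤ r)
    (x y : EuclideanSpace ℝ (Fin e)) (f : EuclideanSpace ℝ (Fin e) → ℝ)
    (U : Set (EuclideanSpace ℝ (Fin e))) (hU : IsOpen U) (hx : x ∈ U)
    (hf : ContDiffOn ℝ ((r * j : ℕ) : ℕ∞) f U) :
    (1 / (Nat.factorial (r * j) : ℝ)) *
        iteratedDeriv (r * j) (fun t : ℝ => f (x + t ^ r • y)) 0
      = (1 / (Nat.factorial j : ℝ)) * iteratedFDerivWithin ℝ j f U x (fun _ => y) ∧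
    ∀ k : ℕ, k ≤ r * j → ¬ r ∣ k →
      iteratedDeriv k (fun t : ℝ => f (x + t ^ r • y)) 0 = 0 := by
  have hr0 : r ≠ 0 := by omega
  set n := r * j with hn
  set g : ℝ → ℝ := fun s => f (x + s • y) with hg
  set φ : ℝ → ℝ := fun t => f (x + t ^ r • y) with hφ
  have hgc : ContDiffAt ℝ (n : ℕ∞) g 0 := by
    have hfx : ContDiffAt ℝ (n : ℕ∞) f (x + (0 : ℝ) • y) := by
      rw [show x + (0 : ℝ) • y = x by simp]
      exact hf.contDiffAt (hU.mem_nhds hx)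
    exact hfx.comp 0 ((contDiff_const.add (contDiff_id.smul contDiff_const)).contDiffAt)
  have hpow : ContDiffAt ℝ (n : ℕ∞) (fun t : ℝ => t ^ r) 0 := (contDiff_id.pow r).contDiffAt
  have hφc : ContDiffAt ℝ (n : ℕ∞) φ 0 := by
    have hgc' : ContDiffAt ℝ (n : ℕ∞) g ((fun t : ℝ => t ^ r) 0) := by
      simpa [zero_pow hr0] using hgc
    exact hgc'.comp 0 hpow
  have Pg := taylor_peano n g hgc
  have Pφ := taylor_peano n φ hφc
  have hiter : ∀ m ≤ n, iteratedDeriv m g 0 = iteratedFDeriv ℝ m f x (fun _ => y) := by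
    intro m hm
    have := line_iteratedDeriv f U hU n hf x y m hm 0 (by simpa using hx)
    simpa using this
  have hcomp_t : Tendsto (fun t : ℝ => t ^ r) (nhds (0 : ℝ)) (nhds (0 : ℝ)) := by
    simpa [zero_pow hr0] using (continuous_pow r).tendsto (0 : ℝ)
  have Q := Pg.comp_tendsto hcomp_t
  have hbig : (fun t : ℝ => ((fun t : ℝ => t ^ n) ∘ fun t : ℝ => t ^ r) t) =O[nhds (0 : ℝ)]
      fun t : ℝ => t ^ n := by
    rw [isBigO_iff]
    refine ⟨1, ?_⟩
    have h1 : ∀ᶠ t : ℝ in nhds 0, |t| ≤ 1 := by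
      have := Metric.ball_mem_nhds (0 : ℝ) one_pos
      filter_upwards [this] with t ht
      simp only [Metric.mem_ball, Real.dist_eq, sub_zero] at ht
      exact ht.le
    filter_upwards [h1] with t ht
    simp only [Function.comp, Real.norm_eq_abs, abs_pow, ← pow_mul, one_mul]
    exact pow_le_pow_of_le_one (abs_nonneg t) ht (Nat.le_mul_of_pos_left n (by omega))
  have Q' := Q.trans_isBigO hbig
  -- Q' : ((fun t => g t - ∑ ...) ∘ (·^r)) =o[𝓝 0] (fun t => t ^ n)
  have hhigh : (fun t : ℝ => ∑ m ∈ Finset.Ico (j + 1) (n + 1),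
      iteratedDeriv m g 0 / (m.factorial : ℝ) * (t ^ r) ^ m) =o[nhds (0 : ℝ)]
      fun t : ℝ => t ^ n := by
    apply Asymptotics.IsLittleO.fun_sum
    intro m hm
    obtain ⟨hm1, hm2⟩ := Finset.mem_Ico.1 hm
    have hmn : n < r * m := by
      have h := Nat.mul_le_mul_left r hm1
      rw [Nat.mul_succ] at h
      omega
    have hlo : (fun t : ℝ => (t ^ r) ^ m) =o[nhds (0 : ℝ)] fun t : ℝ => t ^ n := by
      have := isLittleO_pow_pow (𝕜 := ℝ) hmn
      simpa [pow_mul] using this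
    exact hlo.const_mul_left _
  have P1 : (fun t : ℝ => g (t ^ r) - ∑ m ∈ Finset.range (j + 1),
      iteratedDeriv m g 0 / (m.factorial : ℝ) * (t ^ r) ^ m) =o[nhds (0 : ℝ)]
      fun t : ℝ => t ^ n := by
    have hadd := Q'.add hhigh
    refine hadd.congr' (by
      filter_upwards with t
      simp only [Function.comp]
      rw [Finset.sum_Ico_eq_sub _ (Nat.succ_le_succ (Nat.le_mul_of_pos_left j (by omega : 0 < r)))]
      ring) (by rfl)
  -- reindex sum
  have hsum : ∀ t : ℝ, (∑ m ∈ Finset.range (j + 1),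
        iteratedDeriv m g 0 / (m.factorial : ℝ) * (t ^ r) ^ m)
      = ∑ k ∈ Finset.range (n + 1),
        (if r ∣ k then iteratedDeriv (k / r) g 0 / ((k / r).factorial : ℝ) else 0) * t ^ k := by
    intro t
    set F : ℕ → ℝ := fun k =>
      (if r ∣ k then iteratedDeriv (k / r) g 0 / ((k / r).factorial : ℝ) else 0) * t ^ k with hF
    have hinj : ∀ a ∈ Finset.range (j + 1), ∀ b ∈ Finset.range (j + 1),
        r * a = r * b → a = b := fun a _ b _ hab => Nat.eq_of_mul_eq_mul_left (by omega) hab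
    calc (∑ m ∈ Finset.range (j + 1), iteratedDeriv m g 0 / (m.factorial : ℝ) * (t ^ r) ^ m)
        = ∑ m ∈ Finset.range (j + 1), F (r * m) := by
          refine Finset.sum_congr rfl fun m hm => ?_
          rw [hF]
          simp only
          rw [if_pos ⟨m, rfl⟩, Nat.mul_div_cancel_left m (by omega : 0 < r), pow_mul]
      _ = ∑ k ∈ (Finset.range (j + 1)).image (fun m => r * m), F k :=
          (Finset.sum_image hinj).symm
      _ = ∑ k ∈ Finset.range (n + 1), F k := by
          refine Finset.sum_subset ?_ ?_
          · intro k hk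
            simp only [Finset.mem_image, Finset.mem_range] at hk
            obtain ⟨m, hm, rfl⟩ := hk
            have := Nat.mul_le_mul_left r (show m ≤ j by omega)
            exact Finset.mem_range.2 (by omega)
          · intro k hk hk2
            simp only [Finset.mem_image, Finset.mem_range] at hk hk2
            rw [hF]
            simp only
            rw [if_neg, zero_mul]
            intro hdvd
            obtain ⟨m, rfl⟩ := hdvd
            refine hk2 ⟨m, ?_, rfl⟩
            have hle : r * m ≤ r * j := by omega
            have := Nat.le_of_mul_le_mul_left hle (by omega : 0 < r)
            omega
  have P2 := Pφ.sub P1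
  have P3 : (fun t : ℝ => ∑ k ∈ Finset.range (n + 1),
      ((if r ∣ k then iteratedDeriv (k / r) g 0 / ((k / r).factorial : ℝ) else 0)
        - iteratedDeriv k φ 0 / (k.factorial : ℝ)) * t ^ k) =o[nhds (0 : ℝ)]
      fun t : ℝ => t ^ n := by
    refine P2.congr' ?_ (by rfl)
    filter_upwards with t
    have hsplit : (∑ k ∈ Finset.range (n + 1),
        ((if r ∣ k then iteratedDeriv (k / r) g 0 / ((k / r).factorial : ℝ) else 0)
          - iteratedDeriv k φ 0 / (k.factorial : ℝ)) * t ^ k)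
        = (∑ k ∈ Finset.range (n + 1),
            (if r ∣ k then iteratedDeriv (k / r) g 0 / ((k / r).factorial : ℝ) else 0) * t ^ k)
          - ∑ k ∈ Finset.range (n + 1), iteratedDeriv k φ 0 / (k.factorial : ℝ) * t ^ k := by
      rw [← Finset.sum_sub_distrib]
      exact Finset.sum_congr rfl fun k _ => by ring
    rw [hsplit, ← hsum t]
    have hgt : φ t = g (t ^ r) := rfl
    rw [hgt]
    ring
  have hcoef := poly_isLittleO_zero n _ P3
  constructor
  · have h1 := hcoef n le_rfl
    have hdvd : r ∣ n := ⟨j, hn⟩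
    rw [if_pos hdvd] at h1
    have hjr : n / r = j := by rw [hn]; exact Nat.mul_div_cancel_left j (by omega)
    rw [hjr] at h1
    have hjn : j ≤ n := Nat.le_mul_of_pos_left j (by omega : 0 < r)
    rw [iteratedFDerivWithin_of_isOpen j hU hx, ← hiter j hjn]
    rw [one_div, one_div, inv_mul_eq_div, inv_mul_eq_div]
    linarith [h1]
  · intro k hk hrk
    have h1 := hcoef k hk
    rw [if_neg hrk, zero_sub, neg_eq_zero, div_eq_zero_iff] at h1
    rcases h1 with h1 | h1
    · exact h1
    · exact absurd h1 (Nat.cast_ne_zero.2 k.factorial_ne_zero)
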